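/- For Gaussian distributions P = N(m, σ²) and P′ = N(m′, σ′²) on ℝ, the relative entropy D(P‖P′) = (1/2)(ln(σ²/σ′²) + σ′²/σ² + (m−m′)²/σ′² − 1) satisfies D(P‖P′) ≤ (1 + σ′/σ)² ‖θ − θ′‖²/(2σ′²), where θ = (m, σ), θ′ = (m′, σ′) and ‖·‖ is the Euclidean norm on ℝ². -/

import Mathlib

/-- For Gaussians `N(m,σ²)` and `N(m′,σ′²)`, the relative entropy
`D = ½(ln(σ²/σ′²) + σ′²/σ² + (m−m′)²/σ′² − 1)` satisfies
`D ≤ (1 + σ′/σ)² ‖θ − θ′‖² / (2σ′²)` with `θ = (m,σ)`, `θ′ = (m′,σ′)`. -/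
theorem gaussian_kl_bound
    (m m' σ σ' : ℝ) (hσ : 0 < σ) (hσ' : 0 < σ') :
    (1 / 2) * (Real.log (σ ^ 2 / σ' ^ 2) + σ' ^ 2 / σ ^ 2 + (m - m') ^ 2 / σ' ^ 2 - 1)
      ≤ (1 + σ' / σ) ^ 2 * ((m - m') ^ 2 + (σ - σ') ^ 2) / (2 * σ' ^ 2) := by
  have hpos : 0 < σ ^ 2 / σ' ^ 2 := by positivity
  have hlog : Real.log (σ ^ 2 / σ' ^ 2) ≤ σ ^ 2 / σ' ^ 2 - 1 :=
    Real.log_le_sub_one_of_pos hpos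
  have key : (1 / 2) * (σ ^ 2 / σ' ^ 2 - 1 + σ' ^ 2 / σ ^ 2 + (m - m') ^ 2 / σ' ^ 2 - 1)
      ≤ (1 + σ' / σ) ^ 2 * ((m - m') ^ 2 + (σ - σ') ^ 2) / (2 * σ' ^ 2) := by
    field_simp
    have hs2 : (0:ℝ) < σ ^ 2 := by positivity
    have hs'2 : (0:ℝ) < σ' ^ 2 := by positivity
    nlinarith [mul_nonneg (mul_nonneg (mul_nonneg (mul_pos hs2 hs'2).le hs'2.le)
        (sq_nonneg (m - m'))) (mul_nonneg hσ'.le (by linarith : (0:ℝ) ≤ 2 * σ + σ')),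
        mul_nonneg (mul_nonneg hσ'.le (by linarith : (0:ℝ) ≤ 2 * σ + σ')) (sq_nonneg (m - m'))]
  linarith
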